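/- arXiv:1305.2142 — 3 statements merged into one kernel-verified Lean document; each statement's English description precedes it below -/
import Mathlib

section
/- Let n ≥ 1, let C = (C_i^j(d)) be any collection of elements of ℚ_α indexed by integers d ≥ 1 and ordered pairs i ≠ j in {1,…,n}, and let η ∈ ℚ_α(x) be such that η(α_i) is well-defined and nonzero for every i. Suppose F, F′ ∈ H_α⟪ħ⟫[[q]] are such that: (a) for every i, the q⁰-coefficient of F(α_i,ħ,q) is a nonzero element of ℚ_α and every q^d-coefficient with d ≥ 1 lies in ℚ_α(ħ); (b) F′ is C-recursive; and (c) the pair (F,F′) satisfies the η-MPC. Then F′ = 0 if and only if F′ ≅ 0 (mod ħ⁻¹), i.e., if and only if for every i and every d ≥ 0 the coefficient of ħ^r in the q^d-coefficient of F′(α_i,ħ,q) vanishes for every r ≥ 0. -/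
/-!
Setting: `Kf n = ℚ(α₁,…,αₙ)` is the field of rational functions in `n` variables over `ℚ`,
`Lf n = ℚ_α⟪ħ⟫` is the algebra of Laurent series in `ħ⁻¹` (modeled as Laurent series in the
variable `t = ħ⁻¹`, so that the coefficient of `ħ^r` is the Hahn-series coefficient at `-r`).
An element `F ∈ H_α⟪ħ⟫[[q]]` is modeled by its `n` evaluations `F : Fin n → PowerSeries (Lf n)`
(by the Chinese remainder theorem, `H_α ≅ ∏ᵢ ℚ_α` via `x ↦ (αᵢ)ᵢ`, so this is faithful).
-/

open scoped Classical

noncomputable section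

namespace SQ

/-- The field `ℚ_α = ℚ(α₁,…,αₙ)`. -/
abbrev Kf (n : ℕ) : Type := FractionRing (MvPolynomial (Fin n) ℚ)

/-- The element `αᵢ ∈ ℚ_α`. -/
def alpha (n : ℕ) (i : Fin n) : Kf n :=
  algebraMap (MvPolynomial (Fin n) ℚ) (Kf n) (MvPolynomial.X i)

/-- `ℚ_α⟪ħ⟫`: Laurent series in `t = ħ⁻¹`. -/
abbrev Lf (n : ℕ) : Type := LaurentSeries (Kf n)

/-- `ħ = t⁻¹` where `t` is the Laurent-series variable. -/
def hbar (n : ℕ) : Lf n := HahnSeries.single (-1 : ℤ) 1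

/-- The substitution `ħ ↦ −ħ` on `ℚ_α⟪ħ⟫`. -/
def negH (n : ℕ) (x : Lf n) : Lf n :=
  ⟨fun a => (-1 : Kf n) ^ a * x.coeff a,
    x.isPWO_support'.mono fun a ha => by
      simp only [Function.mem_support] at ha ⊢
      exact fun h => ha (by rw [h, mul_zero])⟩

/-- `x ∈ ℚ_α⟪ħ⟫` lies in (the image of) `ℚ_α(ħ)`, i.e. `Q(ħ)·x = P(ħ)` for some polynomials
`P, Q` with `Q ≠ 0`. -/
def IsRatH (n : ℕ) (x : Lf n) : Prop :=
  ∃ P Q : Polynomial (Kf n), Q ≠ 0 ∧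
    Polynomial.aeval (hbar n) Q * x = Polynomial.aeval (hbar n) P

/-- `x ∈ ℚ_α⟪ħ⟫` is a rational function of `ħ`, regular at `ħ = c`, with value `v` there. -/
def RegEvalAt (n : ℕ) (x : Lf n) (c v : Kf n) : Prop :=
  ∃ P Q : Polynomial (Kf n), Polynomial.eval c Q ≠ 0 ∧
    Polynomial.aeval (hbar n) Q * x = Polynomial.aeval (hbar n) P ∧
    v = Polynomial.eval c P / Polynomial.eval c Q

/-- `x` is a rational function of `ħ` regular at `ħ = c`. -/
def RegAt (n : ℕ) (x : Lf n) (c : Kf n) : Prop := ∃ v : Kf n, RegEvalAt n x c v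

/-- `x` is a Laurent polynomial in `ħ`, i.e. an element of `ℚ_α[ħ,ħ⁻¹]`. -/
def IsLaurentPolyH (n : ℕ) (x : Lf n) : Prop := x.support.Finite

/-- `x` is a polynomial in `ħ`, i.e. an element of `ℚ_α[ħ]`. -/
def IsPolyH (n : ℕ) (x : Lf n) : Prop :=
  ∃ P : Polynomial (Kf n), x = Polynomial.aeval (hbar n) P

/-- Definition 5.1 (`C`-recursivity).  `C d i j` is the structure constant `C_i^j(d)`
(only the values with `d ≥ 1` and `j ≠ i` are used). -/
def CRecursive (n : ℕ) (C : ℕ → Fin n → Fin n → Kf n)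
    (F : Fin n → PowerSeries (Lf n)) : Prop :=
  ∀ dstar : ℕ,
    (∀ d : ℕ, 1 ≤ d → d ≤ dstar → ∀ i : Fin n,
        IsRatH n (PowerSeries.coeff (R := Lf n) (dstar - d) (F i))) →
    (∀ d : ℕ, 1 ≤ d → d < dstar → ∀ i j : Fin n, i ≠ j →
        RegAt n (PowerSeries.coeff (R := Lf n) d (F i))
          ((alpha n i - alpha n j) / (d : Kf n))) →
    ∀ i : Fin n, ∃ v : ℕ → Fin n → Kf n,
      (∀ d : ℕ, ∀ j : Fin n, 1 ≤ d → d ≤ dstar → j ≠ i →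
          RegEvalAt n (PowerSeries.coeff (R := Lf n) (dstar - d) (F j))
            ((alpha n j - alpha n i) / (d : Kf n)) (v d j)) ∧
      IsLaurentPolyH n
        (PowerSeries.coeff (R := Lf n) dstar (F i)
          - ∑ d ∈ Finset.Icc 1 dstar, ∑ j ∈ Finset.univ.erase i,
              algebraMap (Kf n) (Lf n) (C d i j)
                * (hbar n
                    - algebraMap (Kf n) (Lf n)
                        ((alpha n j - alpha n i) / (d : Kf n)))⁻¹
                * algebraMap (Kf n) (Lf n) (v d j))

/-- The coefficient of `z^a q^D` in
`Φ^η_{F,F′}(ħ,z,q) = ∑ᵢ (η(αᵢ) e^{αᵢ z} / ∏_{k≠i}(αᵢ−α_k)) F(αᵢ,ħ,q e^{ħz}) F′(αᵢ,−ħ,q)`.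
(Only the values `η(αᵢ)` of the rational function `η` enter the definition, so `η` is
represented by its tuple of values `eta : Fin n → Kf n`.) -/
def PhiCoeff (n : ℕ) (eta : Fin n → Kf n) (F F' : Fin n → PowerSeries (Lf n))
    (a D : ℕ) : Lf n :=
  ∑ i : Fin n, ∑ d ∈ Finset.range (D + 1), ∑ m ∈ Finset.range (a + 1),
    algebraMap (Kf n) (Lf n)
        (eta i / (∏ k ∈ Finset.univ.erase i, (alpha n i - alpha n k))
          * (alpha n i ^ m / (Nat.factorial m : Kf n))
          * ((d : Kf n) ^ (a - m) / (Nat.factorial (a - m) : Kf n)))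
      * hbar n ^ (a - m)
      * PowerSeries.coeff (R := Lf n) d (F i)
      * negH n (PowerSeries.coeff (R := Lf n) (D - d) (F' i))

/-- The η mutual polynomiality condition: every coefficient of `z^a q^D` of `Φ^η_{F,F′}`
is a polynomial in `ħ`. -/
def MPC (n : ℕ) (eta : Fin n → Kf n) (F F' : Fin n → PowerSeries (Lf n)) : Prop :=
  ∀ a D : ℕ, IsPolyH n (PhiCoeff n eta F F' a D)


lemma negH_coeff (n : ℕ) (x : Lf n) (a : ℤ) :
    (negH n x).coeff a = (-1 : Kf n) ^ a * x.coeff a := rfl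

lemma negH_zero (n : ℕ) : negH n 0 = 0 := by
  ext a
  simp [negH_coeff]

/-- The submodule of Laurent series supported in nonpositive exponents. -/
def negSupp (n : ℕ) : Submodule (Kf n) (Lf n) where
  carrier := {x | ∀ a : ℤ, 0 < a → x.coeff a = 0}
  add_mem' := fun hx hy a ha => by
    rw [HahnSeries.coeff_add, hx a ha, hy a ha, add_zero]
  zero_mem' := fun a _ => HahnSeries.coeff_zero
  smul_mem' := fun c x hx a ha => by
    rw [HahnSeries.coeff_smul, hx a ha, smul_zero]

lemma hbar_pow (n : ℕ) (k : ℕ) :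
    hbar n ^ k = HahnSeries.single (-(k : ℤ)) (1 : Kf n) := by
  rw [hbar, HahnSeries.single_pow, one_pow]
  norm_num

lemma algebraMap_eq_single (n : ℕ) (c : Kf n) :
    algebraMap (Kf n) (Lf n) c = HahnSeries.single (0 : ℤ) c := by
  rw [HahnSeries.algebraMap_apply', PowerSeries.algebraMap_apply, Algebra.algebraMap_self_apply,
    HahnSeries.ofPowerSeries_C, HahnSeries.C_apply]

lemma algebraMap_mul_eq_smul (n : ℕ) (c : Kf n) (x : Lf n) :
    algebraMap (Kf n) (Lf n) c * x = c • x := by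
  rw [algebraMap_eq_single, ← HahnSeries.C_apply, HahnSeries.C_mul_eq_smul]

lemma isPolyH_mem (n : ℕ) (x : Lf n) (hx : IsPolyH n x) : x ∈ negSupp n := by
  obtain ⟨P, rfl⟩ := hx
  induction P using Polynomial.induction_on' with
  | add p q hp hq =>
    rw [map_add]
    exact (negSupp n).add_mem hp hq
  | monomial k c =>
    intro a ha
    rw [Polynomial.aeval_monomial, hbar_pow, algebraMap_eq_single,
      HahnSeries.single_mul_single,
      HahnSeries.coeff_single_of_ne (by omega : a ≠ 0 + -(k : ℤ))]

lemma alpha_injective (n : ℕ) : Function.Injective (alpha n) := by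
  intro i j h
  have := IsFractionRing.injective (MvPolynomial (Fin n) ℚ) (Kf n) h
  exact MvPolynomial.X_injective this

lemma vand_solve (n : ℕ) (z : Fin n → Lf n)
    (hz : ∀ a : ℕ, (∑ j : Fin n, (alpha n j ^ a) • z j) ∈ negSupp n) (i : Fin n) :
    z i ∈ negSupp n := by
  set V : Matrix (Fin n) (Fin n) (Kf n) := (Matrix.vandermonde (alpha n)).transpose with hV
  have hdet : V.det ≠ 0 := by
    rw [hV, Matrix.det_transpose]
    exact Matrix.det_vandermonde_ne_zero_iff.mpr (alpha_injective n)
  have hWV : V⁻¹ * V = 1 := Matrix.nonsing_inv_mul V (by simpa using hdet)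
  have key : z i = ∑ a : Fin n, (V⁻¹ i a) • (∑ j : Fin n, (alpha n j ^ (a : ℕ)) • z j) := by
    have : ∀ (a j : Fin n), (alpha n j ^ (a : ℕ)) = V a j := by
      intro a j; simp [hV, Matrix.vandermonde]
    calc z i = ∑ j : Fin n, ((1 : Matrix (Fin n) (Fin n) (Kf n)) i j) • z j := by
          rw [Finset.sum_eq_single i
            (fun b _ hb => by rw [Matrix.one_apply_ne (Ne.symm hb)]; exact zero_smul (Kf n) (z b))
            (by simp)]
          rw [Matrix.one_apply_eq, one_smul]
      _ = ∑ j : Fin n, ((V⁻¹ * V) i j) • z j := by rw [hWV]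
      _ = ∑ a : Fin n, (V⁻¹ i a) • (∑ j : Fin n, (alpha n j ^ (a : ℕ)) • z j) := by
          simp only [Matrix.mul_apply, this, Finset.smul_sum, smul_smul]
          rw [Finset.sum_comm]
          exact Finset.sum_congr rfl fun j _ => by rw [← Finset.sum_smul]
  rw [key]
  exact Submodule.sum_mem _ fun a _ => Submodule.smul_mem _ _ (hz a)

lemma phi_eq (n : ℕ) (eta : Fin n → Kf n) (F F' : Fin n → PowerSeries (Lf n))
    (c : Fin n → Kf n)
    (hc : ∀ i : Fin n, PowerSeries.coeff (R := Lf n) 0 (F i) = algebraMap (Kf n) (Lf n) (c i))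
    (D : ℕ) (hIH : ∀ d : ℕ, d < D → ∀ i : Fin n, PowerSeries.coeff (R := Lf n) d (F' i) = 0)
    (a : ℕ) :
    PhiCoeff n eta F F' a D =
      ∑ i : Fin n,
        (eta i / (∏ k ∈ Finset.univ.erase i, (alpha n i - alpha n k))
            * (alpha n i ^ a / (Nat.factorial a : Kf n)) * c i) •
          negH n (PowerSeries.coeff (R := Lf n) D (F' i)) := by
  unfold PhiCoeff
  refine Finset.sum_congr rfl fun i _ => ?_
  rw [Finset.sum_eq_single 0
    (fun d hd hd0 => Finset.sum_eq_zero fun m _ => by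
      rw [hIH (D - d) (by simp only [Finset.mem_range] at hd; omega) i, negH_zero, mul_zero])
    (fun hnot => absurd (Finset.mem_range.mpr (by omega)) hnot)]
  rw [Finset.sum_eq_single a
    (fun m hm hma => by
      rw [Nat.cast_zero, zero_pow (by simp only [Finset.mem_range] at hm; omega : a - m ≠ 0),
        zero_div, mul_zero, map_zero, zero_mul, zero_mul, zero_mul])
    (fun hnot => absurd (Finset.mem_range.mpr (by omega)) hnot)]
  rw [Nat.sub_self, Nat.sub_zero, Nat.cast_zero, pow_zero, Nat.factorial_zero, Nat.cast_one,
    div_one, mul_one, pow_zero, mul_one, hc i, ← map_mul, algebraMap_mul_eq_smul]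

/-- Proposition `uniqueness_prp`: if the `q⁰`-coefficient of each `F(αᵢ)` is a
nonzero constant and all higher `q`-coefficients are rational in `ħ`, `F′` is `C`-recursive, and
`(F,F′)` satisfies the `η`-MPC, then `F′ = 0` iff `F′ ≅ 0 (mod ħ⁻¹)`, i.e. iff all coefficients
of `ħ^r q^d`, `r ≥ 0`, of every `F′(αᵢ)` vanish. -/
theorem statement0 (n : ℕ) (hn : 1 ≤ n)
    (C : ℕ → Fin n → Fin n → Kf n)
    (eta : Fin n → Kf n) (heta : ∀ i : Fin n, eta i ≠ 0)
    (F F' : Fin n → PowerSeries (Lf n))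
    (hF0 : ∀ i : Fin n, ∃ c : Kf n, c ≠ 0 ∧
        PowerSeries.coeff (R := Lf n) 0 (F i) = algebraMap (Kf n) (Lf n) c)
    (hFd : ∀ i : Fin n, ∀ d : ℕ, 1 ≤ d →
        IsRatH n (PowerSeries.coeff (R := Lf n) d (F i)))
    (hrec : CRecursive n C F')
    (hmpc : MPC n eta F F') :
    (∀ i : Fin n, F' i = 0) ↔
      (∀ (i : Fin n) (d r : ℕ),
        (PowerSeries.coeff (R := Lf n) d (F' i)).coeff (-(r : ℤ)) = 0) := by
  constructor
  · intro h i d r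
    rw [h i, map_zero, HahnSeries.coeff_zero]
  · intro h
    choose c hc0 hc using hF0
    have prodne : ∀ j : Fin n,
        (∏ k ∈ Finset.univ.erase j, (alpha n j - alpha n k)) ≠ 0 := by
      intro j
      refine Finset.prod_ne_zero_iff.mpr fun k hk => sub_ne_zero.mpr fun hjk => ?_
      exact (Finset.mem_erase.mp hk).1 (alpha_injective n hjk).symm
    have key : ∀ D : ℕ, ∀ i : Fin n, PowerSeries.coeff (R := Lf n) D (F' i) = 0 := by
      intro D
      induction D using Nat.strong_induction_on with
      | _ D IH =>
      intro i
      set x : Fin n → Lf n := fun j => PowerSeries.coeff (R := Lf n) D (F' j) with hx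
      set z : Fin n → Lf n := fun j =>
        (eta j / (∏ k ∈ Finset.univ.erase j, (alpha n j - alpha n k)) * c j) • negH n (x j)
        with hzdef
      have hfacne : ∀ a : ℕ, ((Nat.factorial a : ℕ) : Kf n) ≠ 0 := fun a =>
        Nat.cast_ne_zero.mpr (Nat.factorial_ne_zero a)
      have hz : ∀ a : ℕ, (∑ j : Fin n, (alpha n j ^ a) • z j) ∈ negSupp n := by
        intro a
        have hmem : ((Nat.factorial a : Kf n) • PhiCoeff n eta F F' a D) ∈ negSupp n :=
          Submodule.smul_mem _ _ (isPolyH_mem n _ (hmpc a D))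
        have heq : (Nat.factorial a : Kf n) • PhiCoeff n eta F F' a D
            = ∑ j : Fin n, (alpha n j ^ a) • z j := by
          rw [phi_eq n eta F F' c hc D (fun d hd j => IH d hd j) a, Finset.smul_sum]
          refine Finset.sum_congr rfl fun j _ => ?_
          rw [hzdef, smul_smul, smul_smul]
          congr 1
          have hfa := hfacne a
          have hpj := prodne j
          field_simp
        rwa [heq] at hmem
      have hzi := vand_solve n z hz i
      have hbne : eta i / (∏ k ∈ Finset.univ.erase i, (alpha n i - alpha n k)) * c i ≠ 0 :=
        mul_ne_zero (div_ne_zero (heta i) (prodne i)) (hc0 i)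
      have hnegx : negH n (x i) ∈ negSupp n := by
        have := Submodule.smul_mem (negSupp n)
          (eta i / (∏ k ∈ Finset.univ.erase i, (alpha n i - alpha n k)) * c i)⁻¹ hzi
        rwa [hzdef, inv_smul_smul₀ hbne] at this
      show x i = 0
      ext a
      rw [HahnSeries.coeff_zero]
      rcases le_or_gt a 0 with ha | ha
      · have ha2 : a = -(((-a).toNat : ℕ) : ℤ) := by omega
        rw [ha2]
        exact h i D (-a).toNat
      · have h2 := hnegx a ha
        rw [negH_coeff] at h2
        exact (mul_eq_zero.mp h2).resolve_left
          (zpow_ne_zero a (neg_ne_zero.mpr one_ne_zero))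
    intro i
    exact PowerSeries.ext fun d => by rw [key d i, map_zero]

end SQ
end
end

section
/- For all integers n ≥ 1, ν ≥ 0, r ≥ 0 and d ≥ 0, the coefficient of z^d in 𝓗^{(r)}_ν(z) is a homogeneous symmetric polynomial of degree r − νd in α_1,…,α_n; in particular, for ν ≥ 1 this coefficient vanishes whenever νd > r. -/
/-!
Setting: in `MvPolynomial (Fin n) ℚ`, `esymm` is the elementary symmetric polynomial `𝔰_r`,
and `psum` is the power sum `p_r`.  The polynomial `H = H^{(r+ν)} ∈ ℚ[y₁,…,y_{r+ν}]` is
characterized by the hypothesis that `p_{r+ν} = H(e₁,…,e_{r+ν})` holds in any number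
`N ≥ r+ν` of variables.  Below, `HcalCoeff n ν r d H` is the coefficient of `z^d` in
`𝓗^{(r)}_ν(z)`:
* for `ν = 0`, `r = 0`: `𝓗^{(0)}_0(z) = (1−z)⁻¹ = ∑_d z^d`, so the coefficient is `1`;
* for `ν = 0`, `r ≥ 1`: `𝓗^{(r)}_0(z) = (1/r)(d/dz)H^{(r)}(𝔰₁(1−z)⁻¹,…,𝔰_r(1−z)⁻¹)`, whose
  `z^d`-coefficient is `((d+1)/r)` times the `z^{d+1}`-coefficient of the substituted series,
  with `(1−z)⁻¹ = ∑_d z^d` the geometric power series;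
* for `ν ≥ 1`:
  `𝓗^{(r)}_ν(z) = (1/(r+ν))(d/dz)H^{(r+ν)}(𝔰₁,…,𝔰_{ν−1},𝔰_ν−(−1)^ν z,𝔰_{ν+1},…,𝔰_{r+ν})`,
  whose `z^d`-coefficient is `((d+1)/(r+ν))` times the `z^{d+1}`-coefficient of the
  substituted polynomial in `z`.
-/

noncomputable section

open MvPolynomial

namespace SQ

/-- The coefficient of `z^d` in `𝓗^{(r)}_ν(z)`, as an element of `ℚ[α₁,…,αₙ]`. -/
def HcalCoeff (n ν r d : ℕ) (H : MvPolynomial (Fin (r + ν)) ℚ) : MvPolynomial (Fin n) ℚ :=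
  if ν = 0 then
    (if r = 0 then 1
     else
       (((d + 1 : ℕ) : ℚ) / (r : ℚ)) •
         PowerSeries.coeff (R := MvPolynomial (Fin n) ℚ) (d + 1)
           (MvPolynomial.aeval
             (fun j : Fin (r + ν) =>
               PowerSeries.C (R := MvPolynomial (Fin n) ℚ) (esymm (Fin n) ℚ ((j : ℕ) + 1))
                 * PowerSeries.mk fun _ => (1 : MvPolynomial (Fin n) ℚ)) H))
  else
    (((d + 1 : ℕ) : ℚ) / ((r + ν : ℕ) : ℚ)) •
      Polynomial.coeff
        (MvPolynomial.aeval
          (fun j : Fin (r + ν) =>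
            if (j : ℕ) = ν - 1 then
              Polynomial.C (esymm (Fin n) ℚ ν)
                - Polynomial.C ((-1 : MvPolynomial (Fin n) ℚ) ^ ν) * Polynomial.X
            else Polynomial.C (esymm (Fin n) ℚ ((j : ℕ) + 1))) H)
        (d + 1)

open Finset

private lemma esymm_isHomog (σ : Type*) [Fintype σ] [DecidableEq σ] (k : ℕ) :
    (esymm σ ℚ k).IsHomogeneous k := by
  rw [esymm]
  apply IsHomogeneous.sum
  intro s hs
  have := IsHomogeneous.prod s (fun i => (X i : MvPolynomial σ ℚ)) (fun _ => 1)
    (fun i _ => isHomogeneous_X _ i)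
  rw [mem_powersetCard_univ] at hs
  simpa [hs] using this

private lemma psum_isHomog (σ : Type*) [Fintype σ] (k : ℕ) :
    (psum σ ℚ k).IsHomogeneous k := by
  rw [psum]
  apply IsHomogeneous.sum
  intro i _
  simpa using (isHomogeneous_X ℚ i).pow k

private lemma isSymm_sum {σ : Type*} {ι : Type*} (s : Finset ι)
    (f : ι → MvPolynomial σ ℚ) (h : ∀ i ∈ s, (f i).IsSymmetric) :
    (∑ i ∈ s, f i).IsSymmetric := fun e => by
  rw [map_sum]
  exact Finset.sum_congr rfl fun i hi => h i hi e

private lemma isSymm_prod {σ : Type*} {ι : Type*} [DecidableEq σ] (s : Finset ι)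
    (f : ι → MvPolynomial σ ℚ) (h : ∀ i ∈ s, (f i).IsSymmetric) :
    (∏ i ∈ s, f i).IsSymmetric := fun e => by
  rw [map_prod]
  exact Finset.prod_congr rfl fun i hi => h i hi e

private lemma isSymm_pow {σ : Type*} {p : MvPolynomial σ ℚ} (hp : p.IsSymmetric) (k : ℕ) :
    (p ^ k).IsSymmetric := fun e => by rw [map_pow, hp e]

private lemma aeval_weighted_isHomog {k : ℕ} {w : Fin k → ℕ} {m : ℕ}
    {H : MvPolynomial (Fin k) ℚ} (hH : H.IsWeightedHomogeneous w m)
    {τ : Type*} (g : Fin k → MvPolynomial τ ℚ)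
    (hg : ∀ j, (g j).IsHomogeneous (w j)) :
    (aeval g H).IsHomogeneous m := by
  rw [H.as_sum, map_sum]
  apply IsHomogeneous.sum
  intro t ht
  rw [aeval_monomial]
  have h2 := IsHomogeneous.prod t.support (fun j => g j ^ t j) (fun j => w j * t j)
    (fun j _ => (hg j).pow _)
  have hw : ∑ j ∈ t.support, w j * t j = m := by
    have := hH (mem_support_iff.mp ht)
    rw [Finsupp.weight_apply, Finsupp.sum] at this
    rw [← this]
    exact Finset.sum_congr rfl fun j _ => (mul_comm _ _)
  rw [hw] at h2
  have : (algebraMap ℚ (MvPolynomial τ ℚ)) (coeff t H) = C (coeff t H) := rfl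
  rw [this]
  exact h2.C_mul _

private lemma weighted_of_psum {k : ℕ} (H : MvPolynomial (Fin k) ℚ)
    (h : aeval (fun j : Fin k => esymm (Fin k) ℚ ((j : ℕ) + 1)) H = psum (Fin k) ℚ k) :
    H.IsWeightedHomogeneous (fun j : Fin k => (j : ℕ) + 1) k := by
  classical
  set w : Fin k → ℕ := fun j => (j : ℕ) + 1 with hwdef
  set E : Fin k → MvPolynomial (Fin k) ℚ := fun j => esymm (Fin k) ℚ ((j : ℕ) + 1) with hE
  have hcomp : ∀ c : ℕ, c ≠ k → aeval E (weightedHomogeneousComponent w c H) = 0 := by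
    intro c hc
    have hfin := weightedHomogeneousComponent_finsupp (w := w) H
    have hHsum : H = ∑ m ∈ hfin.toFinset, weightedHomogeneousComponent w m H := by
      conv_lhs => rw [← sum_weightedHomogeneousComponent w H]
      rw [finsum_eq_sum _ hfin]
    by_cases hmem : c ∈ hfin.toFinset
    · have h1 : ∀ m : ℕ, (aeval E (weightedHomogeneousComponent w m H)).IsHomogeneous m :=
        fun m => aeval_weighted_isHomog
          (weightedHomogeneousComponent_isWeightedHomogeneous m H) E
          (fun j => esymm_isHomog _ _)
      have h2 : homogeneousComponent c (psum (Fin k) ℚ k) = 0 := by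
        rw [homogeneousComponent_of_mem (psum_isHomog (Fin k) k), if_neg hc]
      have h3 : homogeneousComponent c (aeval E H)
          = aeval E (weightedHomogeneousComponent w c H) := by
        conv_lhs => rw [hHsum]
        rw [map_sum, map_sum]
        rw [Finset.sum_congr rfl (fun m _ => homogeneousComponent_of_mem (h1 m))]
        simp [Finset.sum_ite_eq, hmem]
      rw [h, h2] at h3
      exact h3.symm
    · have hz : weightedHomogeneousComponent w c H = 0 := by
        by_contra hne
        exact hmem ((Set.Finite.mem_toFinset _).mpr (Function.mem_support.mpr hne))
      rw [hz, map_zero]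
  have hinj : ∀ c : ℕ, c ≠ k → weightedHomogeneousComponent w c H = 0 := by
    intro c hc
    have h0 : esymmAlgHom (Fin k) ℚ k (weightedHomogeneousComponent w c H) = 0 := by
      apply Subtype.ext
      rw [esymmAlgHom_apply]
      simpa using hcomp c hc
    exact esymmAlgHom_fin_injective ℚ (le_refl k) (by rw [h0, map_zero])
  intro d hd
  by_contra hne
  have hz := hinj _ hne
  have hcd : coeff d (weightedHomogeneousComponent w (Finsupp.weight w d) H) = coeff d H := by
    rw [coeff_weightedHomogeneousComponent, if_pos rfl]
  rw [hz, coeff_zero] at hcd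
  exact hd hcd.symm

private lemma coeff_C_add_C_mul_X_pow {R : Type*} [CommRing R] (a b : R) (k c : ℕ) :
    ((Polynomial.C a + Polynomial.C b * Polynomial.X) ^ k).coeff c
      = a ^ (k - c) * b ^ c * (k.choose c : R) := by
  rw [add_comm (Polynomial.C a), add_pow, Polynomial.finset_sum_coeff]
  have hterm : ∀ i : ℕ, (Polynomial.C b * Polynomial.X) ^ i * Polynomial.C a ^ (k - i)
      * (k.choose i : Polynomial R)
      = Polynomial.C (b ^ i * a ^ (k - i) * (k.choose i : R)) * Polynomial.X ^ i := by
    intro i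
    simp only [mul_pow, ← map_pow, ← Polynomial.C_eq_natCast, map_mul]
    ring
  rw [Finset.sum_congr rfl fun i _ => by rw [hterm i]]
  simp only [Polynomial.coeff_C_mul, Polynomial.coeff_X_pow, mul_ite, mul_one, mul_zero]
  rw [Finset.sum_ite_eq (Finset.range (k + 1)) c
    (fun i => b ^ i * a ^ (k - i) * (k.choose i : R))]
  by_cases hck : c ≤ k
  · rw [if_pos (Finset.mem_range.mpr (Nat.lt_succ_of_le hck))]; ring
  · rw [if_neg (by simpa using hck), Nat.choose_eq_zero_of_lt (by omega), Nat.cast_zero, mul_zero]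

private lemma geom_pow_coeff {n : ℕ} (S k : ℕ) :
    ((PowerSeries.coeff (R := MvPolynomial (Fin n) ℚ) k)
      ((PowerSeries.mk fun _ => (1 : MvPolynomial (Fin n) ℚ)) ^ S)).IsSymmetric ∧
    ((PowerSeries.coeff (R := MvPolynomial (Fin n) ℚ) k)
      ((PowerSeries.mk fun _ => (1 : MvPolynomial (Fin n) ℚ)) ^ S)).IsHomogeneous 0 := by
  induction S generalizing k with
  | zero =>
      rw [pow_zero, PowerSeries.coeff_one]
      split_ifs
      · exact ⟨MvPolynomial.IsSymmetric.one, isHomogeneous_one _ _⟩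
      · exact ⟨MvPolynomial.IsSymmetric.zero, isHomogeneous_zero _ _ _⟩
  | succ S ih =>
      rw [pow_succ, PowerSeries.coeff_mul]
      simp only [PowerSeries.coeff_mk, mul_one]
      constructor
      · exact isSymm_sum _ _ fun p _ => (ih p.1).1
      · exact IsHomogeneous.sum _ _ _ fun p _ => (ih p.1).2

/-- The `ν ≥ 1` case, stated for the raw expression. -/
private lemma case_pos (n ν r d : ℕ) (hν : 1 ≤ ν)
    (H : MvPolynomial (Fin (r + ν)) ℚ)
    (hw : H.IsWeightedHomogeneous (fun j : Fin (r + ν) => (j : ℕ) + 1) (r + ν)) :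
    (Polynomial.coeff
        (MvPolynomial.aeval
          (fun j : Fin (r + ν) =>
            if (j : ℕ) = ν - 1 then
              Polynomial.C (esymm (Fin n) ℚ ν)
                - Polynomial.C ((-1 : MvPolynomial (Fin n) ℚ) ^ ν) * Polynomial.X
            else Polynomial.C (esymm (Fin n) ℚ ((j : ℕ) + 1))) H)
        (d + 1)).IsSymmetric ∧
    (ν * d ≤ r → (Polynomial.coeff
        (MvPolynomial.aeval
          (fun j : Fin (r + ν) =>
            if (j : ℕ) = ν - 1 then
              Polynomial.C (esymm (Fin n) ℚ ν)
                - Polynomial.C ((-1 : MvPolynomial (Fin n) ℚ) ^ ν) * Polynomial.X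
            else Polynomial.C (esymm (Fin n) ℚ ((j : ℕ) + 1))) H)
        (d + 1)).IsHomogeneous (r - ν * d)) ∧
    (r < ν * d → Polynomial.coeff
        (MvPolynomial.aeval
          (fun j : Fin (r + ν) =>
            if (j : ℕ) = ν - 1 then
              Polynomial.C (esymm (Fin n) ℚ ν)
                - Polynomial.C ((-1 : MvPolynomial (Fin n) ℚ) ^ ν) * Polynomial.X
            else Polynomial.C (esymm (Fin n) ℚ ((j : ℕ) + 1))) H)
        (d + 1) = 0) := by
  classical
  set i0 : Fin (r + ν) := ⟨ν - 1, by omega⟩ with hi0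
  set b : MvPolynomial (Fin n) ℚ := -((-1 : MvPolynomial (Fin n) ℚ) ^ ν) with hb
  set f : Fin (r + ν) → Polynomial (MvPolynomial (Fin n) ℚ) := fun j =>
    if (j : ℕ) = ν - 1 then
      Polynomial.C (esymm (Fin n) ℚ ν)
        - Polynomial.C ((-1 : MvPolynomial (Fin n) ℚ) ^ ν) * Polynomial.X
    else Polynomial.C (esymm (Fin n) ℚ ((j : ℕ) + 1)) with hf
  have hfi0 : f i0 = Polynomial.C (esymm (Fin n) ℚ ν) + Polynomial.C b * Polynomial.X := by
    simp only [hf]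
    rw [if_pos rfl, hb, map_neg]
    ring
  have hfj : ∀ j, j ≠ i0 → f j = Polynomial.C (esymm (Fin n) ℚ ((j : ℕ) + 1)) := by
    intro j hj
    simp only [hf]
    rw [if_neg]
    intro h
    exact hj (Fin.ext (by simpa [i0] using h))
  -- the value of each monomial's contribution
  set P : (Fin (r + ν) →₀ ℕ) → ℚ → MvPolynomial (Fin n) ℚ := fun t c =>
    C c * (∏ j ∈ univ.erase i0, esymm (Fin n) ℚ ((j : ℕ) + 1) ^ t j)
      * (esymm (Fin n) ℚ ν ^ (t i0 - (d + 1)) * b ^ (d + 1)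
          * (((t i0).choose (d + 1) : MvPolynomial (Fin n) ℚ))) with hP
  have hmono : ∀ (t : Fin (r + ν) →₀ ℕ) (c : ℚ),
      (aeval f (monomial t c)).coeff (d + 1) = P t c := by
    intro t c
    rw [aeval_monomial, Finsupp.prod_fintype _ _ (fun j => pow_zero _)]
    rw [← Finset.mul_prod_erase univ _ (mem_univ i0)]
    rw [Finset.prod_congr rfl (fun j hj => by rw [hfj j (Finset.ne_of_mem_erase hj)])]
    rw [hfi0]
    simp only [← map_pow]
    rw [← map_prod]
    rw [Polynomial.algebraMap_apply]
    have halg : algebraMap ℚ (MvPolynomial (Fin n) ℚ) c = C c := rfl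
    rw [halg]
    have hre : Polynomial.C (C c) *
        ((Polynomial.C (esymm (Fin n) ℚ ν) + Polynomial.C b * Polynomial.X) ^ t i0 *
          Polynomial.C (∏ j ∈ univ.erase i0, esymm (Fin n) ℚ ((j : ℕ) + 1) ^ t j))
        = Polynomial.C (C c * ∏ j ∈ univ.erase i0, esymm (Fin n) ℚ ((j : ℕ) + 1) ^ t j) *
          (Polynomial.C (esymm (Fin n) ℚ ν) + Polynomial.C b * Polynomial.X) ^ t i0 := by
      rw [map_mul]; ring
    rw [hre, Polynomial.coeff_C_mul, coeff_C_add_C_mul_X_pow]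
  have hsum : (aeval f H).coeff (d + 1) = ∑ t ∈ H.support, P t (coeff t H) := by
    conv_lhs => rw [H.as_sum]
    rw [map_sum, Polynomial.finset_sum_coeff]
    exact Finset.sum_congr rfl fun t _ => hmono t _
  -- weights
  have hWt : ∀ t ∈ H.support,
      ν * t i0 + ∑ j ∈ univ.erase i0, ((j : ℕ) + 1) * t j = r + ν := by
    intro t ht
    have hwt := hw (mem_support_iff.mp ht)
    rw [Finsupp.weight_apply] at hwt
    rw [Finsupp.sum_fintype] at hwt
    · have hsplit : (∑ i : Fin (r + ν), t i • ((i : ℕ) + 1))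
          = ν * t i0 + ∑ j ∈ univ.erase i0, ((j : ℕ) + 1) * t j := by
        rw [← Finset.add_sum_erase univ _ (mem_univ i0)]
        congr 1
        · rw [smul_eq_mul, mul_comm]
          have hval : ((i0 : ℕ)) = ν - 1 := rfl
          congr 1
          omega
        · exact Finset.sum_congr rfl fun j _ => by rw [smul_eq_mul, mul_comm]
      exact hsplit.symm.trans hwt
    · intro i
      exact zero_smul ℕ _
  have hbC : b = C ((-(-1 : ℚ) ^ ν)) := by
    rw [hb]
    simp
  have hcast : ∀ k : ℕ, ((k : MvPolynomial (Fin n) ℚ)) = C (k : ℚ) := by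
    intro k
    simp
  refine ⟨?_, ?_, ?_⟩
  · rw [hsum]
    apply isSymm_sum
    intro t _
    rw [hP]
    refine ((IsSymmetric.C _).mul (isSymm_prod _ _ fun j _ =>
      isSymm_pow (esymm_isSymmetric _ _ _) _)).mul
      (((isSymm_pow (esymm_isSymmetric _ _ _) _).mul ?_).mul ?_)
    · rw [hbC]
      exact isSymm_pow (IsSymmetric.C _) _
    · rw [hcast]
      exact IsSymmetric.C _
  · intro hle
    rw [hsum]
    apply IsHomogeneous.sum
    intro t ht
    by_cases hk : d + 1 ≤ t i0
    · have h1 : (C (coeff t H) *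
          (∏ j ∈ univ.erase i0, esymm (Fin n) ℚ ((j : ℕ) + 1) ^ t j) :
          MvPolynomial (Fin n) ℚ).IsHomogeneous
            (∑ j ∈ univ.erase i0, ((j : ℕ) + 1) * t j) :=
        (IsHomogeneous.prod _ _ _ fun j _ => (esymm_isHomog _ _).pow _).C_mul _
      have h2 : ((esymm (Fin n) ℚ ν ^ (t i0 - (d + 1)) * b ^ (d + 1)
          * (((t i0).choose (d + 1) : MvPolynomial (Fin n) ℚ)))).IsHomogeneous
            (ν * (t i0 - (d + 1))) := by
        have hb0 : (b ^ (d + 1)).IsHomogeneous 0 := by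
          rw [hbC, ← map_pow]
          exact isHomogeneous_C _ _
        have hc0 : (((t i0).choose (d + 1) : MvPolynomial (Fin n) ℚ)).IsHomogeneous 0 := by
          rw [hcast]
          exact isHomogeneous_C _ _
        have := (((esymm_isHomog (Fin n) ν).pow (t i0 - (d + 1))).mul hb0).mul hc0
        simpa using this
      have h3 := h1.mul h2
      have harith : (∑ j ∈ univ.erase i0, ((j : ℕ) + 1) * t j) + ν * (t i0 - (d + 1))
          = r - ν * d := by
        have := hWt t ht
        have h4 : ν * (t i0 - (d + 1)) + ν * (d + 1) = ν * t i0 := by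
          rw [← Nat.mul_add]
          congr 1
          omega
        have h8 : ν * (d + 1) = ν * d + ν := by ring
        omega
      rw [harith] at h3
      rw [hP]
      exact h3
    · have : ((t i0).choose (d + 1)) = 0 := Nat.choose_eq_zero_of_lt (by omega)
      rw [hP]
      simp only [this, Nat.cast_zero, mul_zero]
      exact isHomogeneous_zero _ _ _
  · intro hlt
    rw [hsum]
    apply Finset.sum_eq_zero
    intro t ht
    have h5 := hWt t ht
    have h6 : ν * t i0 < ν * (d + 1) := by
      have : ν * t i0 ≤ r + ν := by omega
      calc ν * t i0 ≤ r + ν := this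
        _ < ν * d + ν := by omega
        _ = ν * (d + 1) := by ring
    have h7 : t i0 < d + 1 := Nat.lt_of_mul_lt_mul_left h6
    have : ((t i0).choose (d + 1)) = 0 := Nat.choose_eq_zero_of_lt h7
    rw [hP]
    simp [this]

/-- The `ν = 0`, `r ≥ 1` case, stated for the raw expression. -/
private lemma case_zero (n r d : ℕ) (hr : 1 ≤ r)
    (H : MvPolynomial (Fin (r + 0)) ℚ)
    (hw : H.IsWeightedHomogeneous (fun j : Fin (r + 0) => (j : ℕ) + 1) (r + 0)) :
    ((PowerSeries.coeff (R := MvPolynomial (Fin n) ℚ) (d + 1)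
        (MvPolynomial.aeval
          (fun j : Fin (r + 0) =>
            PowerSeries.C (R := MvPolynomial (Fin n) ℚ) (esymm (Fin n) ℚ ((j : ℕ) + 1))
              * PowerSeries.mk fun _ => (1 : MvPolynomial (Fin n) ℚ)) H))).IsSymmetric ∧
    ((PowerSeries.coeff (R := MvPolynomial (Fin n) ℚ) (d + 1)
        (MvPolynomial.aeval
          (fun j : Fin (r + 0) =>
            PowerSeries.C (R := MvPolynomial (Fin n) ℚ) (esymm (Fin n) ℚ ((j : ℕ) + 1))
              * PowerSeries.mk fun _ => (1 : MvPolynomial (Fin n) ℚ)) H))).IsHomogeneous r := by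
  classical
  set G : PowerSeries (MvPolynomial (Fin n) ℚ) := PowerSeries.mk fun _ => 1 with hG
  set g : Fin (r + 0) → PowerSeries (MvPolynomial (Fin n) ℚ) := fun j =>
    PowerSeries.C (R := MvPolynomial (Fin n) ℚ) (esymm (Fin n) ℚ ((j : ℕ) + 1)) * G with hg
  set P : (Fin (r + 0) →₀ ℕ) → ℚ → MvPolynomial (Fin n) ℚ := fun t c =>
    (C c * ∏ j : Fin (r + 0), esymm (Fin n) ℚ ((j : ℕ) + 1) ^ t j)
      * PowerSeries.coeff (R := MvPolynomial (Fin n) ℚ) (d + 1) (G ^ (∑ j : Fin (r + 0), t j))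
    with hP
  have hmono : ∀ (t : Fin (r + 0) →₀ ℕ) (c : ℚ),
      PowerSeries.coeff (R := MvPolynomial (Fin n) ℚ) (d + 1) (aeval g (monomial t c)) = P t c := by
    intro t c
    rw [aeval_monomial, Finsupp.prod_fintype _ _ (fun j => pow_zero _)]
    have hprod : (∏ j : Fin (r + 0), g j ^ t j)
        = PowerSeries.C (R := MvPolynomial (Fin n) ℚ)
            (∏ j : Fin (r + 0), esymm (Fin n) ℚ ((j : ℕ) + 1) ^ t j)
          * G ^ (∑ j : Fin (r + 0), t j) := by
      simp only [hg, mul_pow, ← map_pow]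
      rw [Finset.prod_mul_distrib, ← map_prod, Finset.prod_pow_eq_pow_sum]
    rw [hprod, PowerSeries.algebraMap_apply]
    have halg : algebraMap ℚ (MvPolynomial (Fin n) ℚ) c = C c := rfl
    rw [halg, ← mul_assoc, ← map_mul, PowerSeries.coeff_C_mul]
  have hsum : PowerSeries.coeff (R := MvPolynomial (Fin n) ℚ) (d + 1) (aeval g H)
      = ∑ t ∈ H.support, P t (coeff t H) := by
    conv_lhs => rw [H.as_sum]
    rw [map_sum, map_sum]
    exact Finset.sum_congr rfl fun t _ => hmono t _
  have hWt : ∀ t ∈ H.support, ∑ j : Fin (r + 0), ((j : ℕ) + 1) * t j = r := by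
    intro t ht
    have hwt := hw (mem_support_iff.mp ht)
    rw [Finsupp.weight_apply] at hwt
    rw [Finsupp.sum_fintype] at hwt
    · have hcg : ∑ j : Fin (r + 0), ((j : ℕ) + 1) * t j
          = ∑ i : Fin (r + 0), t i • ((i : ℕ) + 1) :=
        Finset.sum_congr rfl fun j _ => by rw [smul_eq_mul, mul_comm]
      exact hcg.trans (hwt.trans (Nat.add_zero r))
    · intro i
      exact zero_smul ℕ _
  constructor
  · rw [hsum]
    apply isSymm_sum
    intro t _
    simp only [hP]
    exact ((IsSymmetric.C _).mul (isSymm_prod _ _ fun j _ =>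
      isSymm_pow (esymm_isSymmetric _ _ _) _)).mul (geom_pow_coeff _ _).1
  · rw [hsum]
    apply IsHomogeneous.sum
    intro t ht
    simp only [hP]
    have h1 : ((C (coeff t H) *
        ∏ j : Fin (r + 0), esymm (Fin n) ℚ ((j : ℕ) + 1) ^ t j :
          MvPolynomial (Fin n) ℚ)).IsHomogeneous
          (∑ j : Fin (r + 0), ((j : ℕ) + 1) * t j) :=
      (IsHomogeneous.prod _ _ _ fun j _ => (esymm_isHomog _ _).pow _).C_mul _
    have h2 := h1.mul (geom_pow_coeff (S := ∑ j : Fin (r + 0), t j) (d + 1)).2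
    rw [hWt t ht] at h2
    simpa using h2

/-- the coefficient of `z^d` in `𝓗^{(r)}_ν(z)` is a homogeneous symmetric
polynomial of degree `r − νd` in `α₁,…,αₙ`; in particular, for `ν ≥ 1` it vanishes whenever
`νd > r`. -/
theorem statement8 (n : ℕ) (hn : 1 ≤ n) (ν r d : ℕ)
    (H : MvPolynomial (Fin (r + ν)) ℚ)
    (hH : 1 ≤ r + ν → ∀ N : ℕ, r + ν ≤ N →
        MvPolynomial.aeval (fun j : Fin (r + ν) => esymm (Fin N) ℚ ((j : ℕ) + 1)) H
          = psum (Fin N) ℚ (r + ν)) :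
    (HcalCoeff n ν r d H).IsSymmetric ∧
    (ν * d ≤ r → (HcalCoeff n ν r d H).IsHomogeneous (r - ν * d)) ∧
    (1 ≤ ν → r < ν * d → HcalCoeff n ν r d H = 0) := by
  unfold HcalCoeff
  by_cases hν : ν = 0
  · subst hν
    rw [if_pos rfl]
    by_cases hr : r = 0
    · subst hr
      rw [if_pos rfl]
      exact ⟨MvPolynomial.IsSymmetric.one,
        fun _ => by simpa using isHomogeneous_one (Fin n) ℚ,
        fun h => by omega⟩
    · rw [if_neg hr]
      have hw : H.IsWeightedHomogeneous (fun j : Fin (r + 0) => (j : ℕ) + 1) (r + 0) :=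
        weighted_of_psum H (hH (by omega) (r + 0) le_rfl)
      obtain ⟨h1, h2⟩ := case_zero n r d (by omega) H hw
      refine ⟨h1.smul _, fun _ => ?_, fun h => by omega⟩
      rw [smul_eq_C_mul]
      simpa using h2.C_mul _
  · rw [if_neg hν]
    have hw : H.IsWeightedHomogeneous (fun j : Fin (r + ν) => (j : ℕ) + 1) (r + ν) :=
      weighted_of_psum H (hH (by omega) (r + ν) le_rfl)
    obtain ⟨h1, h2, h3⟩ := case_pos n ν r d (by omega) H hw
    refine ⟨h1.smul _, fun hle => ?_, fun _ hlt => ?_⟩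
    · rw [smul_eq_C_mul]
      exact (h2 hle).C_mul _
    · rw [h3 hlt, smul_zero]


end SQ
end
end

section
/- For every integer s with 0 ≤ s < ℓ⁻(a), the power series İ_s(q) equals 1; and for every integer s with 0 ≤ s < ℓ⁺(a), the power series Ï_s(q) equals 1. -/
/-!
Setting: `Rw = ℚ(w)` is the field of rational functions of `w`, and power series in `q` over
`Rw` model `ℚ(w)[[q]]`.  The operator `𝔻H = H + (q/w)∂H/∂q` multiplies the `q^d`-coefficient
by `1 + d/w`, and `𝕄H = 𝔻(H/H(0,q))`, where `H(0,q)` is obtained by evaluating each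
coefficient at `w = 0`.  The hypergeometric series `Ḟ`, `F̈`, `F` and the series
`İ_s = (𝕄^s Ḟ)(0,q)`, `Ï_s = (𝕄^s F̈)(0,q)`, `I_s = (𝕄^s F)(0,q)` are as in the paper, for a
tuple `a : Fin l → ℤ` of nonzero integers with `∑ |a_k| = n` (the Calabi–Yau case).
-/

noncomputable section

namespace SQ

/-- `ℚ(w)`. -/
abbrev Rw : Type := RatFunc ℚ

/-- The variable `w`. -/
def w : Rw := RatFunc.X

/-- Evaluation of a rational function of `w` at `w = 0` (junk value if not regular there). -/
def ev0 (f : Rw) : ℚ := RatFunc.eval (RingHom.id ℚ) 0 f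

/-- The operator `𝔻H = H + (q/w)·∂H/∂q` on `ℚ(w)[[q]]`: `(𝔻H)_d = (1 + d·w⁻¹)·H_d`. -/
def DD (H : PowerSeries Rw) : PowerSeries Rw :=
  PowerSeries.mk fun d => (1 + (d : Rw) * w⁻¹) * PowerSeries.coeff (R := Rw) d H

/-- `H(0,q) ∈ ℚ[[q]] ⊂ ℚ(w)[[q]]`: each coefficient of `H` evaluated at `w = 0`. -/
def ev0Series (H : PowerSeries Rw) : PowerSeries Rw :=
  PowerSeries.mk fun d => algebraMap ℚ Rw (ev0 (PowerSeries.coeff (R := Rw) d H))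

/-- `𝕄H = 𝔻(H / H(0,q))`. -/
def MM (H : PowerSeries Rw) : PowerSeries Rw := DD (H * (ev0Series H)⁻¹)

/-- `ℓ⁺(a) = #{k : a_k > 0}`. -/
def ellPlus (l : ℕ) (a : Fin l → ℤ) : ℕ := (Finset.univ.filter fun k => 0 < a k).card

/-- `ℓ⁻(a) = #{k : a_k < 0}`. -/
def ellMinus (l : ℕ) (a : Fin l → ℤ) : ℕ := (Finset.univ.filter fun k => a k < 0).card

/-- `a^a = ∏_k a_k^{|a_k|}`. -/
def aPowA (l : ℕ) (a : Fin l → ℤ) : ℤ := ∏ k : Fin l, a k ^ (a k).natAbs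

/-- The hypergeometric series `Ḟ(w,q)`. -/
def Fdot (l n : ℕ) (a : Fin l → ℤ) : PowerSeries Rw :=
  PowerSeries.mk fun d =>
    (∏ k : Fin l,
        if 0 < a k then
          ∏ r ∈ Finset.range ((a k).toNat * d), ((a k : Rw) * w + ((r : Rw) + 1))
        else
          ∏ r ∈ Finset.range ((a k).natAbs * d), ((a k : Rw) * w - (r : Rw)))
      / ∏ r ∈ Finset.range d, ((w + ((r : Rw) + 1)) ^ n - w ^ n)

/-- The hypergeometric series `F̈(w,q)`. -/
def Fddot (l n : ℕ) (a : Fin l → ℤ) : PowerSeries Rw :=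
  PowerSeries.mk fun d =>
    (∏ k : Fin l,
        if 0 < a k then
          ∏ r ∈ Finset.range ((a k).toNat * d), ((a k : Rw) * w + (r : Rw))
        else
          ∏ r ∈ Finset.range ((a k).natAbs * d), ((a k : Rw) * w - ((r : Rw) + 1)))
      / ∏ r ∈ Finset.range d, ((w + ((r : Rw) + 1)) ^ n - w ^ n)

/-- The hypergeometric series `F(w,q)`. -/
def Fhat (l n : ℕ) (a : Fin l → ℤ) : PowerSeries Rw :=
  PowerSeries.mk fun d =>
    (∏ k : Fin l,
        if 0 < a k then
          ∏ r ∈ Finset.range ((a k).toNat * d), ((a k : Rw) * w + ((r : Rw) + 1))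
        else
          ∏ r ∈ Finset.range ((a k).natAbs * d), ((a k : Rw) * w - ((r : Rw) + 1)))
      / ∏ r ∈ Finset.range d, (w + ((r : Rw) + 1)) ^ (n : ℕ)

/-- `İ_s(q) = (𝕄^s Ḟ)(0,q) ∈ ℚ[[q]]`. -/
def Idot (l n : ℕ) (a : Fin l → ℤ) (s : ℕ) : PowerSeries ℚ :=
  PowerSeries.mk fun d => ev0 (PowerSeries.coeff (R := Rw) d (MM^[s] (Fdot l n a)))

/-- `Ï_s(q) = (𝕄^s F̈)(0,q) ∈ ℚ[[q]]`. -/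
def Iddot (l n : ℕ) (a : Fin l → ℤ) (s : ℕ) : PowerSeries ℚ :=
  PowerSeries.mk fun d => ev0 (PowerSeries.coeff (R := Rw) d (MM^[s] (Fddot l n a)))

/-- `I_s(q) = (𝕄^s F)(0,q) ∈ ℚ[[q]]`. -/
def Ihat (l n : ℕ) (a : Fin l → ℤ) (s : ℕ) : PowerSeries ℚ :=
  PowerSeries.mk fun d => ev0 (PowerSeries.coeff (R := Rw) d (MM^[s] (Fhat l n a)))


open Polynomial Finset

abbrev alg : ℚ[X] →+* Rw := algebraMap ℚ[X] Rw

lemma alg_X : alg X = w := RatFunc.algebraMap_X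

lemma ev0_div (Q D : ℚ[X]) (hD : D.eval 0 ≠ 0) :
    ev0 (alg Q / alg D) = Q.eval 0 / D.eval 0 := by
  have hDne : D ≠ 0 := by rintro rfl; simp at hD
  set x : Rw := alg Q / alg D with hx
  have hdvd : RatFunc.denom x ∣ D := RatFunc.denom_div_dvd Q D
  have hden0 : (RatFunc.denom x).eval 0 ≠ 0 := by
    obtain ⟨c, hc⟩ := hdvd
    intro h
    apply hD
    rw [hc, eval_mul, h, zero_mul]
  have key : (RatFunc.num x) * D = Q * RatFunc.denom x := by
    apply RatFunc.algebraMap_injective ℚ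
    have h1 : alg (RatFunc.num x) / alg (RatFunc.denom x) = alg Q / alg D := by
      rw [RatFunc.num_div_denom x]
    have hdne : alg (RatFunc.denom x) ≠ 0 :=
      RatFunc.algebraMap_ne_zero (RatFunc.denom_ne_zero x)
    have hDne' : alg D ≠ 0 := RatFunc.algebraMap_ne_zero hDne
    rw [div_eq_div_iff hdne hDne'] at h1
    rw [map_mul, map_mul]
    linear_combination h1
  have keval : (RatFunc.num x).eval 0 * D.eval 0 = Q.eval 0 * (RatFunc.denom x).eval 0 := by
    have := congrArg (Polynomial.eval (0 : ℚ)) key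
    simpa [eval_mul] using this
  have hev : ev0 x = (RatFunc.num x).eval 0 / (RatFunc.denom x).eval 0 := rfl
  rw [hev, div_eq_div_iff hden0 hD]
  linear_combination keval

lemma ev0_one : ev0 1 = 1 := RatFunc.eval_one _ _

/-- The key invariant: constant coefficient `1` and all higher coefficients of the form
`Q/D` with `X^m ∣ Q` and `D` regular and nonzero at `0`. -/
def Good (m : ℕ) (H : PowerSeries Rw) : Prop :=
  PowerSeries.coeff (R := Rw) 0 H = 1 ∧ ∀ d : ℕ, 0 < d → ∃ Q D : ℚ[X],
    X ^ m ∣ Q ∧ D.eval 0 ≠ 0 ∧ PowerSeries.coeff (R := Rw) d H = alg Q / alg D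

lemma ev0_coeff_of_good {m : ℕ} {H : PowerSeries Rw} (h : Good m H) (hm : 1 ≤ m)
    {d : ℕ} (hd : 0 < d) : ev0 (PowerSeries.coeff (R := Rw) d H) = 0 := by
  obtain ⟨Q, D, hQ, hD, hcoeff⟩ := h.2 d hd
  have hQ0 : Q.eval 0 = 0 := by
    obtain ⟨c, rfl⟩ := hQ
    simp [zero_pow (by omega : m ≠ 0)]
  rw [hcoeff, ev0_div _ _ hD, hQ0, zero_div]

lemma ev0Series_of_good {m : ℕ} {H : PowerSeries Rw} (h : Good m H) (hm : 1 ≤ m) :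
    ev0Series H = 1 := by
  ext d
  rcases Nat.eq_zero_or_pos d with rfl | hd
  · simp [ev0Series, h.1, ev0_one]
  · simp [ev0Series, ev0_coeff_of_good h hm hd, PowerSeries.coeff_one, hd.ne']

lemma good_DD {m : ℕ} {H : PowerSeries Rw} (h : Good m H) (hm : 1 ≤ m) :
    Good (m - 1) (DD H) := by
  constructor
  · simp [DD, h.1]
  · intro d hd
    obtain ⟨Q, D, hQ, hD, hcoeff⟩ := h.2 d hd
    obtain ⟨c, rfl⟩ := hQ
    refine ⟨(X + (d : ℚ[X])) * (X ^ (m - 1) * c), D, ⟨(X + (d : ℚ[X])) * c, by ring⟩, hD, ?_⟩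
    have hwne : w ≠ 0 := RatFunc.X_ne_zero
    simp only [DD, PowerSeries.coeff_mk, hcoeff, map_mul, map_add, map_pow, map_natCast, alg_X]
    have hm' : w ^ m = w * w ^ (m - 1) := by
      conv_lhs => rw [show m = 1 + (m - 1) by omega]
      rw [pow_add, pow_one]
    have hDne : alg D ≠ 0 := RatFunc.algebraMap_ne_zero (by rintro rfl; simp at hD)
    rw [hm']
    field_simp [hwne, hDne]

lemma good_MM {m : ℕ} {H : PowerSeries Rw} (h : Good m H) (hm : 1 ≤ m) :
    MM H = DD H ∧ Good (m - 1) (DD H) := by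
  refine ⟨?_, good_DD h hm⟩
  rw [MM, ev0Series_of_good h hm, inv_one, mul_one]

lemma good_iter {m : ℕ} {H : PowerSeries Rw} (h : Good m H) :
    ∀ s, s ≤ m → Good (m - s) (MM^[s] H) := by
  intro s
  induction s with
  | zero => intro _; simpa using h
  | succ t ih =>
    intro hsm
    have ht := ih (by omega)
    have h1 : 1 ≤ m - t := by omega
    rw [Function.iterate_succ_apply', (good_MM ht h1).1]
    have := (good_MM ht h1).2
    rwa [show m - t - 1 = m - (t + 1) by omega] at this

lemma denomPoly_eval_ne (n d : ℕ) (hn : 1 ≤ n) :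
    (∏ r ∈ Finset.range d, ((X + ((r : ℚ[X]) + 1)) ^ n - X ^ n)).eval 0 ≠ 0 := by
  rw [eval_prod]
  rw [Finset.prod_ne_zero_iff]
  intro r _
  have : ((X + ((r : ℚ[X]) + 1)) ^ n - X ^ n).eval 0 = ((r : ℚ) + 1) ^ n := by
    simp [zero_pow (by omega : n ≠ 0)]
  rw [this]
  positivity

lemma good_Fdot (l n : ℕ) (hn : 1 ≤ n) (a : Fin l → ℤ) (ha : ∀ k, a k ≠ 0) :
    Good (ellMinus l a) (Fdot l n a) := by
  constructor
  · simp [Fdot]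
  · intro d hd
    refine ⟨∏ k : Fin l,
        (if 0 < a k then
          ∏ r ∈ Finset.range ((a k).toNat * d), ((a k : ℚ[X]) * X + ((r : ℚ[X]) + 1))
        else
          ∏ r ∈ Finset.range ((a k).natAbs * d), ((a k : ℚ[X]) * X - (r : ℚ[X]))),
      ∏ r ∈ Finset.range d, ((X + ((r : ℚ[X]) + 1)) ^ n - X ^ n),
      ?_, denomPoly_eval_ne n d hn, ?_⟩
    · calc X ^ ellMinus l a
          = ∏ k ∈ Finset.univ.filter (fun k => a k < 0), (X : ℚ[X]) := by
            rw [Finset.prod_const, ellMinus]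
        _ ∣ ∏ k ∈ Finset.univ.filter (fun k => a k < 0),
            (if 0 < a k then
              ∏ r ∈ Finset.range ((a k).toNat * d), ((a k : ℚ[X]) * X + ((r : ℚ[X]) + 1))
            else
              ∏ r ∈ Finset.range ((a k).natAbs * d), ((a k : ℚ[X]) * X - (r : ℚ[X]))) := by
            apply Finset.prod_dvd_prod_of_dvd
            intro k hk
            rw [Finset.mem_filter] at hk
            rw [if_neg (by omega)]
            have h0 : 0 ∈ Finset.range ((a k).natAbs * d) := by
              simp only [Finset.mem_range]
              have := ha k
              have : 0 < (a k).natAbs := Int.natAbs_pos.mpr this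
              positivity
            refine dvd_trans ?_ (Finset.dvd_prod_of_mem _ h0)
            simp
        _ ∣ _ := Finset.prod_dvd_prod_of_subset _ _ _ (Finset.filter_subset _ _)
    · simp only [Fdot, PowerSeries.coeff_mk]
      simp only [map_prod, apply_ite (alg), map_add, map_sub, map_mul, map_pow,
        map_intCast, map_natCast, map_one, alg_X]

set_option maxHeartbeats 1000000 in
lemma good_Fddot (l n : ℕ) (hn : 1 ≤ n) (a : Fin l → ℤ) (ha : ∀ k, a k ≠ 0) :
    Good (ellPlus l a) (Fddot l n a) := by
  constructor
  · simp [Fddot]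
  · intro d hd
    refine ⟨∏ k : Fin l,
        (if 0 < a k then
          ∏ r ∈ Finset.range ((a k).toNat * d), ((a k : ℚ[X]) * X + (r : ℚ[X]))
        else
          ∏ r ∈ Finset.range ((a k).natAbs * d), ((a k : ℚ[X]) * X - ((r : ℚ[X]) + 1))),
      ∏ r ∈ Finset.range d, ((X + ((r : ℚ[X]) + 1)) ^ n - X ^ n),
      ?_, denomPoly_eval_ne n d hn, ?_⟩
    · calc X ^ ellPlus l a
          = ∏ k ∈ Finset.univ.filter (fun k => 0 < a k), (X : ℚ[X]) := by
            rw [Finset.prod_const, ellPlus]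
        _ ∣ ∏ k ∈ Finset.univ.filter (fun k => 0 < a k),
            (if 0 < a k then
              ∏ r ∈ Finset.range ((a k).toNat * d), ((a k : ℚ[X]) * X + (r : ℚ[X]))
            else
              ∏ r ∈ Finset.range ((a k).natAbs * d), ((a k : ℚ[X]) * X - ((r : ℚ[X]) + 1))) := by
            apply Finset.prod_dvd_prod_of_dvd
            intro k hk
            rw [Finset.mem_filter] at hk
            rw [if_pos hk.2]
            have h0 : 0 ∈ Finset.range ((a k).toNat * d) := by
              simp only [Finset.mem_range]
              have h1 : 0 < (a k).toNat := by omega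
              positivity
            refine dvd_trans ?_ (Finset.dvd_prod_of_mem _ h0)
            simp
        _ ∣ _ := Finset.prod_dvd_prod_of_subset _ _ _ (Finset.filter_subset _ _)
    · simp only [Fddot, PowerSeries.coeff_mk]
      simp only [map_prod, apply_ite (alg), map_add, map_sub, map_mul, map_pow,
        map_intCast, map_natCast, map_one, alg_X]

lemma eq_one_of_good {H : PowerSeries Rw} {m s : ℕ} (h : Good m H) (hs : s < m) :
    (PowerSeries.mk fun d => ev0 (PowerSeries.coeff (R := Rw) d (MM^[s] H))) = (1 : PowerSeries ℚ) := by
  have hg := good_iter h s (by omega)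
  have h1 : 1 ≤ m - s := by omega
  ext d
  rcases Nat.eq_zero_or_pos d with rfl | hd
  · simp [hg.1, ev0_one]
  · simp [ev0_coeff_of_good hg h1 hd, PowerSeries.coeff_one, hd.ne']

/-- `İ_s(q) = 1` for `0 ≤ s < ℓ⁻(a)` and `Ï_s(q) = 1` for `0 ≤ s < ℓ⁺(a)`. -/
theorem statement10 (l n : ℕ) (hn : 1 ≤ n) (a : Fin l → ℤ) (ha : ∀ k, a k ≠ 0)
    (hCY : ∑ k : Fin l, (a k).natAbs = n) :
    (∀ s : ℕ, s < ellMinus l a → Idot l n a s = 1) ∧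
    (∀ s : ℕ, s < ellPlus l a → Iddot l n a s = 1) := by
  constructor
  · intro s hs
    exact eq_one_of_good (good_Fdot l n hn a ha) hs
  · intro s hs
    exact eq_one_of_good (good_Fddot l n hn a ha) hs

end SQ
end
end
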